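/- For positive semidefinite matrices A, B and any s ∈ [0,1], one has Tr(A) - Tr((A-B)₊) ≤ Tr(A^s B^{1-s}), where (A-B)₊ denotes the positive part of A-B. Equivalently, Tr(A^{1-s} B^s) + Tr(A^s B^{1-s}) ≥ Tr(A) + Tr(B) - ‖A-B‖₁ in the symmetric form; in particular with Tr(A+B)=1, 1 - ‖A-B‖₁ ≤ 2 Tr(A^s B^{1-s}). -/

import Mathlib

open Matrix
open scoped ComplexOrder

/-- Trace norm `‖X‖₁ = Tr √(XᴴX)`. -/
noncomputable def traceNorm {n : Type*} [Fintype n] [DecidableEq n] (X : Matrix n n ℂ) : ℝ :=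
  (((Matrix.posSemidef_conjTranspose_mul_self X).1.eigenvectorUnitary : Matrix n n ℂ) *
    diagonal (((↑) : ℝ → ℂ) ∘ Real.sqrt ∘ (Matrix.posSemidef_conjTranspose_mul_self X).1.eigenvalues) *
    (star (Matrix.posSemidef_conjTranspose_mul_self X).1.eigenvectorUnitary : Matrix n n ℂ)).trace.re

/-- Fractional power `A^s` of a positive semidefinite matrix, defined spectrally with the
convention `0 ^ s = 0` for all real `s`. -/
noncomputable def Matrix.PosSemidef.rpow {n : Type*} [Fintype n] [DecidableEq n]
    {A : Matrix n n ℂ} (hA : A.PosSemidef) (s : ℝ) : Matrix n n ℂ :=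
  hA.1.cfc (fun x => if x = 0 then 0 else x ^ s)

/-- Matrix logarithm of a positive semidefinite matrix, defined spectrally with the
convention `log 0 = 0` on the kernel. -/
noncomputable def Matrix.PosSemidef.log {n : Type*} [Fintype n] [DecidableEq n]
    {A : Matrix n n ℂ} (hA : A.PosSemidef) : Matrix n n ℂ :=
  hA.1.cfc Real.log

namespace Audenaert

variable {n : Type*} [Fintype n] [DecidableEq n]

lemma ofReal_eq : (RCLike.ofReal : ℝ → ℂ) = Complex.ofReal := rfl

section cfcHelpers
variable {A : Matrix n n ℂ} (hA : A.IsHermitian) (f g : ℝ → ℝ)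

lemma cfc_eq' : hA.cfc f = (hA.eigenvectorUnitary : Matrix n n ℂ)
    * diagonal (fun i => (f (hA.eigenvalues i) : ℂ))
    * star (hA.eigenvectorUnitary : Matrix n n ℂ) := rfl

lemma cfc_mul_cfc : hA.cfc f * hA.cfc g = hA.cfc (fun x => f x * g x) := by
  set U := (hA.eigenvectorUnitary : Matrix n n ℂ) with hU
  have hVU : star U * U = 1 := Unitary.coe_star_mul_self _
  rw [cfc_eq', cfc_eq', cfc_eq']
  simp only [Matrix.mul_assoc]
  rw [show star U * (U * (diagonal (fun i => (g (hA.eigenvalues i) : ℂ)) * star U))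
      = diagonal (fun i => (g (hA.eigenvalues i) : ℂ)) * star U from by
    rw [← Matrix.mul_assoc, hVU, Matrix.one_mul]]
  rw [← Matrix.mul_assoc (diagonal _), diagonal_mul_diagonal]
  congr 2
  funext i
  push_cast
  ring

lemma cfc_one : hA.cfc (fun _ => 1) = 1 := by
  rw [cfc_eq']
  have : (diagonal (fun _ : n => ((1:ℝ) : ℂ))) = (1 : Matrix n n ℂ) := by
    simp
  rw [this, mul_one]
  exact (Matrix.mem_unitaryGroup_iff).mp (hA.eigenvectorUnitary).2

lemma cfc_id : hA.cfc (fun x => x) = A := hA.spectral_theorem.symm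

lemma cfc_congr_eigs (h : ∀ i, f (hA.eigenvalues i) = g (hA.eigenvalues i)) :
    hA.cfc f = hA.cfc g := by
  rw [cfc_eq', cfc_eq',
    show (fun i => ((f (hA.eigenvalues i)):ℂ)) = (fun i => ((g (hA.eigenvalues i)):ℂ)) from
      funext fun i => by rw [h i]]

lemma cfc_sub : hA.cfc (fun x => f x - g x) = hA.cfc f - hA.cfc g := by
  rw [cfc_eq', cfc_eq', cfc_eq', ← Matrix.sub_mul, ← Matrix.mul_sub, diagonal_sub]
  congr 2
  funext i
  push_cast
  ring

lemma cfc_add : hA.cfc (fun x => f x + g x) = hA.cfc f + hA.cfc g := by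
  rw [cfc_eq', cfc_eq', cfc_eq', ← Matrix.add_mul, ← Matrix.mul_add, diagonal_add]
  congr 2
  funext i
  push_cast
  ring

lemma cfc_smulc (c : ℝ) : hA.cfc (fun x => c * f x) = (c : ℂ) • hA.cfc f := by
  rw [cfc_eq', cfc_eq']
  have hD : (diagonal (fun i => ((c * f (hA.eigenvalues i) :ℝ):ℂ)) : Matrix n n ℂ)
      = (c:ℂ) • diagonal (fun i => ((f (hA.eigenvalues i):ℝ):ℂ)) := by
    ext i j
    rcases eq_or_ne i j with rfl | hij
    · simp
    · simp [diagonal_apply_ne _ hij, hij]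
  rw [hD, Matrix.mul_smul, Matrix.smul_mul]

lemma cfc_herm : (hA.cfc f).IsHermitian := by
  rw [cfc_eq']
  unfold Matrix.IsHermitian
  rw [conjTranspose_mul, conjTranspose_mul, diagonal_conjTranspose, star_eq_conjTranspose,
    conjTranspose_conjTranspose, Matrix.mul_assoc]
  congr 2
  funext i
  simp [Pi.star_def]

lemma cfc_psd (h : ∀ i, 0 ≤ f (hA.eigenvalues i)) : (hA.cfc f).PosSemidef := by
  rw [cfc_eq']
  have hd : (diagonal (fun i => (f (hA.eigenvalues i) : ℂ)) : Matrix n n ℂ).PosSemidef := by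
    rw [posSemidef_diagonal_iff]
    intro i
    exact Complex.zero_le_real.mpr (h i)
  have := hd.mul_mul_conjTranspose_same (hA.eigenvectorUnitary : Matrix n n ℂ)
  rwa [← star_eq_conjTranspose] at this

lemma trace_cfc : (hA.cfc f).trace = ((∑ i, f (hA.eigenvalues i) : ℝ) : ℂ) := by
  have hVU : star (hA.eigenvectorUnitary : Matrix n n ℂ) * (hA.eigenvectorUnitary : Matrix n n ℂ) = 1 :=
    Unitary.coe_star_mul_self _
  rw [cfc_eq', trace_mul_cycle, hVU, Matrix.one_mul, trace_diagonal]
  push_cast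
  rfl

lemma trace_cfc_re : ((hA.cfc f).trace).re = ∑ i, f (hA.eigenvalues i) := by
  rw [trace_cfc]; exact Complex.ofReal_re _

lemma cfc_quad (v : n → ℂ) :
    star v ⬝ᵥ (hA.cfc f) *ᵥ v
      = ((∑ i, f (hA.eigenvalues i)
          * Complex.normSq ((star (hA.eigenvectorUnitary : Matrix n n ℂ) *ᵥ v) i) : ℝ) : ℂ) := by
  set U := (hA.eigenvectorUnitary : Matrix n n ℂ) with hU
  set w := star U *ᵥ v with hw
  rw [cfc_eq']
  rw [← mulVec_mulVec, ← mulVec_mulVec]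
  rw [Matrix.dotProduct_mulVec]
  have h1 : star v ᵥ* U = star w := by
    rw [hw, Matrix.star_mulVec, star_eq_conjTranspose, conjTranspose_conjTranspose]
  rw [h1]
  have : star w ⬝ᵥ (diagonal (fun i => (f (hA.eigenvalues i) : ℂ))) *ᵥ w
      = ∑ i, (f (hA.eigenvalues i) : ℂ) * (starRingEnd ℂ (w i) * w i) := by
    simp [dotProduct, Matrix.mulVec_diagonal, Pi.star_def]
    exact Finset.sum_congr rfl fun i _ => by ring
  rw [this]
  push_cast
  refine Finset.sum_congr rfl fun i _ => ?_
  rw [Complex.conj_mul', Complex.normSq_eq_norm_sq]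
  push_cast
  ring

end cfcHelpers

section traceFacts
variable {X Y Z : Matrix n n ℂ}

lemma trace_re_nonneg (hX : X.PosSemidef) : 0 ≤ X.trace.re := by
  have h : ∀ i : n, 0 ≤ (X i i).re := by
    intro i
    have := hX.dotProduct_mulVec_nonneg (Pi.single i 1)
    have h2 : star (Pi.single i (1:ℂ)) ⬝ᵥ X *ᵥ Pi.single i 1 = X i i := by
      simp [dotProduct, Matrix.mulVec, Pi.single_apply, Finset.sum_ite_eq,
        Pi.star_def, apply_ite]
    rw [h2] at this
    exact (Complex.le_def.mp this).1
  rw [Matrix.trace, Complex.re_sum]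
  exact Finset.sum_nonneg fun i _ => h i

lemma trace_mul_re_nonneg (hX : X.PosSemidef) (hY : Y.PosSemidef) : 0 ≤ (X * Y).trace.re := by
  have hS := cfc_herm hX.1 Real.sqrt
  have hSS : hX.1.cfc Real.sqrt * hX.1.cfc Real.sqrt = X := by
    rw [cfc_mul_cfc]
    conv_rhs => rw [← cfc_id hX.1]
    exact cfc_congr_eigs hX.1 _ _ fun i => Real.mul_self_sqrt (hX.eigenvalues_nonneg i)
  have h1 : X * Y = hX.1.cfc Real.sqrt * (hX.1.cfc Real.sqrt * Y) := by
    rw [← Matrix.mul_assoc, hSS]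
  rw [h1, trace_mul_comm]
  have : (hX.1.cfc Real.sqrt * Y * hX.1.cfc Real.sqrt).PosSemidef := by
    have := hY.mul_mul_conjTranspose_same (hX.1.cfc Real.sqrt)
    rwa [hS.eq] at this
  exact trace_re_nonneg this

/-- `Tr(X * Y) ≤ Tr(X * Z)` when `X ≥ 0` and `Y ≤ Z`. -/
lemma trace_mul_mono (hX : X.PosSemidef) (hYZ : (Z - Y).PosSemidef) :
    (X * Y).trace.re ≤ (X * Z).trace.re := by
  have := trace_mul_re_nonneg hX hYZ
  rw [Matrix.mul_sub, trace_sub, Complex.sub_re] at this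
  linarith

lemma trace_mul_mono' (hX : X.PosSemidef) (hYZ : (Z - Y).PosSemidef) :
    (Y * X).trace.re ≤ (Z * X).trace.re := by
  rw [trace_mul_comm Y X, trace_mul_comm Z X]
  exact trace_mul_mono hX hYZ

lemma smul_psd {c : ℝ} (hc : 0 ≤ c) (hX : X.PosSemidef) : ((c:ℂ) • X).PosSemidef := by
  refine Matrix.PosSemidef.of_dotProduct_mulVec_nonneg ?_ ?_
  · unfold Matrix.IsHermitian
    rw [conjTranspose_smul, hX.1.eq]
    congr 1
    simp [Complex.ext_iff]
  · intro v
    rw [smul_mulVec, dotProduct_smul]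
    exact mul_nonneg (Complex.zero_le_real.mpr hc) (hX.dotProduct_mulVec_nonneg v)

lemma one_le_eigenvalues (hXh : X.IsHermitian) (h1 : (X - 1).PosSemidef) (i : n) :
    1 ≤ hXh.eigenvalues i := by
  set u := ⇑(hXh.eigenvectorBasis i) with hu
  have hval := hXh.eigenvalues_eq i
  have hnorm : star u ⬝ᵥ u = 1 := by
    rw [dotProduct_comm, ← EuclideanSpace.inner_eq_star_dotProduct]
    rw [inner_self_eq_norm_sq_to_K (𝕜 := ℂ), hXh.eigenvectorBasis.orthonormal.1 i]
    norm_num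
  have hq := h1.dotProduct_mulVec_nonneg u
  rw [sub_mulVec, dotProduct_sub, one_mulVec, hnorm] at hq
  have : 1 ≤ (star u ⬝ᵥ X *ᵥ u).re := by
    have := (Complex.le_def.mp hq).1
    simp at this
    linarith
  rw [hval]
  exact this

end traceFacts

section resolvent

variable {A M : Matrix n n ℂ}

/-- `A + l•1` as a cfc. -/
lemma cfc_shift (hA : A.IsHermitian) (l : ℝ) :
    hA.cfc (fun x => x + l) = A + (l:ℂ) • 1 := by
  have h1 : (fun x : ℝ => x + l) = fun x => (fun y : ℝ => y) x + (fun y : ℝ => l * 1) x := by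
    funext x; simp
  rw [h1, cfc_add, cfc_id, cfc_smulc, cfc_one]

/-- Antitonicity of the resolvent, in cfc form. -/
lemma resolvent_mono (hA : A.PosSemidef) (hM : M.PosSemidef) (hle : (M - A).PosSemidef)
    {l : ℝ} (hl : 0 < l) :
    (hM.1.cfc (fun x => x / (x + l)) - hA.1.cfc (fun x => x / (x + l))).PosSemidef := by
  have hApos : ∀ i, 0 < hA.1.eigenvalues i + l :=
    fun i => add_pos_of_nonneg_of_pos (hA.eigenvalues_nonneg i) hl
  have hMpos : ∀ i, 0 < hM.1.eigenvalues i + l :=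
    fun i => add_pos_of_nonneg_of_pos (hM.eigenvalues_nonneg i) hl
  set TA := hA.1.cfc (fun x => (Real.sqrt (x + l))⁻¹) with hTAdef
  set SA := hA.1.cfc (fun x => Real.sqrt (x + l)) with hSAdef
  set RA := hA.1.cfc (fun x => (x + l)⁻¹) with hRAdef
  set RM := hM.1.cfc (fun x => (x + l)⁻¹) with hRMdef
  set N := M + (l:ℂ) • 1 with hNdef
  have hTAherm : TA.IsHermitian := cfc_herm hA.1 _
  -- products on the A side
  have hTS : TA * SA = 1 := by
    rw [hTAdef, hSAdef, cfc_mul_cfc, ← cfc_one hA.1]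
    refine cfc_congr_eigs hA.1 _ _ fun i => ?_
    exact inv_mul_cancel₀ (Real.sqrt_ne_zero'.mpr (hApos i))
  have hST : SA * TA = 1 := by
    rw [hSAdef, hTAdef, cfc_mul_cfc, ← cfc_one hA.1]
    refine cfc_congr_eigs hA.1 _ _ fun i => ?_
    exact mul_inv_cancel₀ (Real.sqrt_ne_zero'.mpr (hApos i))
  have hTT : TA * TA = RA := by
    rw [hTAdef, hRAdef, cfc_mul_cfc]
    refine cfc_congr_eigs hA.1 _ _ fun i => ?_
    rw [← mul_inv]
    rw [Real.mul_self_sqrt (hApos i).le]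
  have hTNT1 : TA * (A + (l:ℂ) • 1) * TA = 1 := by
    rw [← cfc_shift hA.1 l, hTAdef, cfc_mul_cfc, cfc_mul_cfc, ← cfc_one hA.1]
    refine cfc_congr_eigs hA.1 _ _ fun i => ?_
    have h := Real.mul_self_sqrt (hApos i).le
    rw [← h]
    field_simp
    rw [Real.sq_sqrt (sq_nonneg _)]
    exact div_self (pow_ne_zero 2 (Real.sqrt_ne_zero'.mpr (hApos i)))
  have hNRM : N * RM = 1 := by
    rw [hNdef, ← cfc_shift hM.1 l, hRMdef, cfc_mul_cfc, ← cfc_one hM.1]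
    refine cfc_congr_eigs hM.1 _ _ fun i => ?_
    exact mul_inv_cancel₀ (hMpos i).ne'
  have hRMN : RM * N = 1 := by
    rw [hNdef, ← cfc_shift hM.1 l, hRMdef, cfc_mul_cfc, ← cfc_one hM.1]
    refine cfc_congr_eigs hM.1 _ _ fun i => ?_
    exact inv_mul_cancel₀ (hMpos i).ne'
  have hNherm : N.IsHermitian := by
    unfold Matrix.IsHermitian
    rw [hNdef, conjTranspose_add, hM.1.eq, conjTranspose_smul, conjTranspose_one]
    congr 1
    congr 1
    simp [Complex.ext_iff]
  -- the conjugated matrix X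
  set X := TA * N * TA with hXdef
  have hXherm : X.IsHermitian := by
    have := Matrix.isHermitian_mul_mul_conjTranspose TA hNherm
    rwa [hTAherm.eq] at this
  have hX1 : (X - 1).PosSemidef := by
    have h1 : X - 1 = TA * (M - A) * TA := by
      rw [hXdef, ← hTNT1, hNdef]
      rw [← Matrix.sub_mul, ← Matrix.mul_sub]
      congr 2
      abel
    rw [h1]
    have := hle.mul_mul_conjTranspose_same TA
    rwa [hTAherm.eq] at this
  have heig : ∀ i, 1 ≤ hXherm.eigenvalues i := fun i => one_le_eigenvalues hXherm hX1 i
  set Y := hXherm.cfc (fun x => x⁻¹) with hYdef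
  have hXY : X * Y = 1 := by
    rw [hYdef]
    nth_rewrite 1 [← cfc_id hXherm]
    rw [cfc_mul_cfc, ← cfc_one hXherm]
    refine cfc_congr_eigs hXherm _ _ fun i => ?_
    exact mul_inv_cancel₀ (by linarith [heig i])
  have hY1 : (1 - Y).PosSemidef := by
    have h1 : (1 : Matrix n n ℂ) - Y = hXherm.cfc (fun x => 1 - x⁻¹) := by
      rw [cfc_sub, cfc_one]
    rw [h1]
    refine cfc_psd hXherm _ fun i => ?_
    have := heig i
    have h2 : (hXherm.eigenvalues i)⁻¹ ≤ 1 := by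
      rw [inv_le_one_iff₀]; right; linarith
    linarith
  -- Z = SA * RM * SA is the inverse of X
  set Z := SA * RM * SA with hZdef
  have hZX : Z * X = 1 := by
    rw [hZdef, hXdef]
    simp only [Matrix.mul_assoc]
    rw [show SA * (TA * (N * TA)) = N * TA from by rw [← Matrix.mul_assoc, hST]; simp]
    rw [show RM * (N * TA) = TA from by rw [← Matrix.mul_assoc, hRMN]; simp]
    exact hST
  have hZY : Z = Y := by
    rw [← Matrix.one_mul Y, ← hZX, Matrix.mul_assoc, hXY, Matrix.mul_one]
  have hZ1 : (1 - Z).PosSemidef := hZY ▸ hY1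
  have hD : (TA * (1 - Z) * TA).PosSemidef := by
    have := hZ1.mul_mul_conjTranspose_same TA
    rwa [hTAherm.eq] at this
  have hTZT : TA * Z * TA = RM := by
    rw [hZdef]
    simp only [Matrix.mul_assoc]
    rw [hST, Matrix.mul_one]
    rw [show TA * (SA * RM) = RM from by rw [← Matrix.mul_assoc, hTS]; simp]
  have hRARM : (RA - RM).PosSemidef := by
    have h1 : TA * (1 - Z) * TA = RA - RM := by
      rw [Matrix.mul_sub, Matrix.mul_one, Matrix.sub_mul, hTT, hTZT]
      
    rwa [h1] at hD
  -- express cfc (x/(x+l)) as 1 - l • R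
  have hgA : hA.1.cfc (fun x => x / (x + l)) = 1 - (l:ℂ) • RA := by
    rw [show hA.1.cfc (fun x => x / (x + l)) = hA.1.cfc (fun x => 1 - l * (x + l)⁻¹) from
      cfc_congr_eigs hA.1 _ _ fun i => by field_simp [(hApos i).ne']; try ring]
    rw [cfc_sub, cfc_one, cfc_smulc, hRAdef]
  have hgM : hM.1.cfc (fun x => x / (x + l)) = 1 - (l:ℂ) • RM := by
    rw [show hM.1.cfc (fun x => x / (x + l)) = hM.1.cfc (fun x => 1 - l * (x + l)⁻¹) from
      cfc_congr_eigs hM.1 _ _ fun i => by field_simp [(hMpos i).ne']; try ring]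
    rw [cfc_sub, cfc_one, cfc_smulc, hRMdef]
  have hfinal : hM.1.cfc (fun x => x / (x + l)) - hA.1.cfc (fun x => x / (x + l))
      = (l:ℂ) • (RA - RM) := by
    rw [hgA, hgM, smul_sub]
    abel
  rw [hfinal]
  exact smul_psd hl.le hRARM

end resolvent

section analytic
open MeasureTheory Set

/-- The normalization constant `∫_0^∞ u^(s-1)/(1+u) du`. -/
noncomputable def Iconst (s : ℝ) : ℝ := ∫ lam in Ioi (0:ℝ), lam ^ (s-1) * (1 / (1 + lam))

lemma continuousOn_aux {s x : ℝ} (hx : 0 ≤ x) :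
    ContinuousOn (fun lam : ℝ => lam ^ (s-1) * (x / (x + lam))) (Ioi 0) := by
  apply ContinuousOn.mul
  · exact ContinuousOn.rpow_const continuousOn_id (fun y hy => Or.inl (ne_of_gt hy))
  · exact ContinuousOn.div continuousOn_const (by fun_prop)
      (fun y hy => (add_pos_of_nonneg_of_pos hx hy).ne')

lemma integrable_aux {s : ℝ} (hs0 : 0 < s) (hs1 : s < 1) {x : ℝ} (hx : 0 ≤ x) :
    IntegrableOn (fun lam : ℝ => lam ^ (s-1) * (x / (x + lam))) (Ioi 0) := by
  rw [← Ioc_union_Ioi_eq_Ioi (zero_le_one : (0:ℝ) ≤ 1)]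
  apply IntegrableOn.union
  · apply Integrable.mono' (g := fun lam : ℝ => lam ^ (s-1))
    · have h := intervalIntegral.intervalIntegrable_rpow' (show (-1:ℝ) < s - 1 by linarith) (a := 0) (b := 1)
      rw [intervalIntegrable_iff, uIoc_of_le zero_le_one] at h
      exact h
    · exact ((continuousOn_aux hx).mono Ioc_subset_Ioi_self).aestronglyMeasurable
        measurableSet_Ioc
    · refine (ae_restrict_iff' measurableSet_Ioc).mpr (Filter.Eventually.of_forall fun y hy => ?_)
      have hy0 : 0 < y := hy.1
      have hden : 0 < x + y := add_pos_of_nonneg_of_pos hx hy0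
      rw [Real.norm_eq_abs, abs_of_nonneg (by positivity)]
      exact mul_le_of_le_one_right (Real.rpow_nonneg hy0.le _)
        (div_le_one_of_le₀ (le_add_of_nonneg_right hy0.le) hden.le)
  · apply Integrable.mono' (g := fun lam : ℝ => x * lam ^ (s-2))
    · exact (integrableOn_Ioi_rpow_of_lt (show s - 2 < -1 by linarith) one_pos).const_mul x
    · exact ((continuousOn_aux hx).mono (Ioi_subset_Ioi zero_le_one)).aestronglyMeasurable
        measurableSet_Ioi
    · refine (ae_restrict_iff' measurableSet_Ioi).mpr (Filter.Eventually.of_forall fun y hy => ?_)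
      have hy1 : (1:ℝ) < y := hy
      have hy0 : 0 < y := lt_trans one_pos hy1
      have hden : 0 < x + y := add_pos_of_nonneg_of_pos hx hy0
      rw [Real.norm_eq_abs, abs_of_nonneg (by positivity)]
      have h1 : x / (x + y) ≤ x / y :=
        div_le_div_of_nonneg_left hx hy0 (le_add_of_nonneg_left hx)
      have h2 : y ^ (s-1) * (x / (x+y)) ≤ y ^ (s-1) * (x / y) :=
        mul_le_mul_of_nonneg_left h1 (Real.rpow_nonneg hy0.le _)
      have h3 : y ^ (s-1) * (x / y) = x * y ^ (s-2) := by
        rw [div_eq_mul_inv, show s - 2 = (s-1) + (-1) by ring, Real.rpow_add hy0,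
          Real.rpow_neg_one]
        ring
      linarith

lemma Iconst_pos {s : ℝ} (hs0 : 0 < s) (hs1 : s < 1) : 0 < Iconst s := by
  have hint : IntegrableOn (fun lam : ℝ => lam ^ (s-1) * (1 / (1 + lam))) (Ioi 0) :=
    integrable_aux hs0 hs1 zero_le_one
  rw [Iconst]
  rw [setIntegral_pos_iff_support_of_nonneg_ae]
  · have hsub : Ioi (0:ℝ) ⊆ Function.support (fun lam : ℝ => lam ^ (s-1) * (1 / (1 + lam))) := by
      intro y hy
      have hy0 : 0 < y := hy
      have : 0 < y ^ (s-1) * (1 / (1 + y)) := by positivity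
      exact this.ne'
    rw [Set.inter_eq_right.mpr hsub]
    simp [Real.volume_Ioi]
  · refine (ae_restrict_iff' measurableSet_Ioi).mpr (Filter.Eventually.of_forall fun y hy => ?_)
    have hy0 : 0 < y := hy
    positivity
  · exact hint

lemma integral_key {s : ℝ} (hs0 : 0 < s) (hs1 : s < 1) {x : ℝ} (hx : 0 ≤ x) :
    ∫ lam in Ioi (0:ℝ), lam ^ (s-1) * (x / (x + lam)) = x ^ s * Iconst s := by
  rcases eq_or_lt_of_le hx with rfl | hx'
  · simp [Real.zero_rpow hs0.ne']
  · have hxs : (0:ℝ) < x ^ (s-1) := Real.rpow_pos_of_pos hx' _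
    have h1 : EqOn (fun lam : ℝ => lam ^ (s-1) * (x / (x + lam)))
        (fun lam : ℝ => x ^ (s-1) * ((x⁻¹ * lam) ^ (s-1) * (1 / (1 + x⁻¹ * lam)))) (Ioi 0) := by
      intro lam hlam
      have hlam0 : 0 < lam := hlam
      have hden : 0 < x + lam := by positivity
      have e1 : (x⁻¹ * lam) ^ (s-1) = (x ^ (s-1))⁻¹ * lam ^ (s-1) := by
        rw [Real.mul_rpow (by positivity) hlam0.le, Real.inv_rpow hx'.le]
      have e2 : 1 + x⁻¹ * lam = (x + lam) / x := by field_simp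
      have e3 : (1:ℝ) / ((x + lam)/x) = x / (x + lam) := one_div_div _ _
      simp only [e1, e2, e3]
      field_simp
    rw [setIntegral_congr_fun measurableSet_Ioi h1, integral_const_mul,
      integral_comp_mul_left_Ioi (fun u => u ^ (s-1) * (1/(1+u))) 0 (inv_pos.mpr hx'),
      mul_zero, inv_inv, smul_eq_mul]
    rw [← Iconst]
    rw [← mul_assoc, ← Real.rpow_add_one hx'.ne']
    ring_nf

lemma aux_eq {s : ℝ} {τ : Type*} [Fintype τ] (c : τ → ℝ) (z : τ → ℝ) :
    (fun l : ℝ => l ^ (s-1) * ∑ i, c i * (z i / (z i + l)))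
      = fun l : ℝ => ∑ i, c i * (l ^ (s-1) * (z i / (z i + l))) := by
  funext l
  rw [Finset.mul_sum]
  exact Finset.sum_congr rfl fun i _ => by ring

lemma aux_int {s : ℝ} (hs0 : 0 < s) (hs1 : s < 1) {τ : Type*} [Fintype τ]
    (c : τ → ℝ) (z : τ → ℝ) (hz : ∀ i, 0 ≤ z i) :
    IntegrableOn (fun l : ℝ => l ^ (s-1) * ∑ i, c i * (z i / (z i + l))) (Ioi 0) := by
  rw [aux_eq c z]
  exact integrable_finset_sum _ fun i _ => ((integrable_aux hs0 hs1 (hz i)).const_mul (c i))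

lemma aux_val {s : ℝ} (hs0 : 0 < s) (hs1 : s < 1) {τ : Type*} [Fintype τ]
    (c : τ → ℝ) (z : τ → ℝ) (hz : ∀ i, 0 ≤ z i) :
    ∫ l in Ioi (0:ℝ), l ^ (s-1) * ∑ i, c i * (z i / (z i + l))
      = (∑ i, c i * z i ^ s) * Iconst s := by
  rw [aux_eq c z, integral_finset_sum _
    (fun i _ => ((integrable_aux hs0 hs1 (hz i)).const_mul (c i))), Finset.sum_mul]
  refine Finset.sum_congr rfl fun i _ => ?_
  rw [integral_const_mul, integral_key hs0 hs1 (hz i)]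
  ring

lemma sum_rpow_le {s : ℝ} (hs0 : 0 < s) (hs1 : s < 1)
    {ι κ : Type*} [Fintype ι] [Fintype κ]
    (w : ι → ℝ) (x : ι → ℝ) (w' : κ → ℝ) (y : κ → ℝ)
    (hw : ∀ i, 0 ≤ w i) (hx : ∀ i, 0 ≤ x i) (hw' : ∀ j, 0 ≤ w' j) (hy : ∀ j, 0 ≤ y j)
    (hcomp : ∀ l : ℝ, 0 < l →
      ∑ i, w i * (x i / (x i + l)) ≤ ∑ j, w' j * (y j / (y j + l))) :
    ∑ i, w i * x i ^ s ≤ ∑ j, w' j * y j ^ s := by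
  have hmono : ∫ l in Ioi (0:ℝ), l ^ (s-1) * ∑ i, w i * (x i / (x i + l))
      ≤ ∫ l in Ioi (0:ℝ), l ^ (s-1) * ∑ j, w' j * (y j / (y j + l)) := by
    refine setIntegral_mono_on (aux_int hs0 hs1 w x hx) (aux_int hs0 hs1 w' y hy)
      measurableSet_Ioi fun l hl => ?_
    exact mul_le_mul_of_nonneg_left (hcomp l hl) (Real.rpow_nonneg (le_of_lt hl) _)
  rw [aux_val hs0 hs1 w x hx, aux_val hs0 hs1 w' y hy] at hmono
  exact le_of_mul_le_mul_right hmono (Iconst_pos hs0 hs1)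

end analytic

section LH
open MeasureTheory Set
variable {A B M P : Matrix n n ℂ}

lemma rpow_psd (hA : A.PosSemidef) (s : ℝ) : (hA.rpow s).PosSemidef := by
  simp only [Matrix.PosSemidef.rpow]
  refine cfc_psd hA.1 _ fun i => ?_
  split
  · exact le_refl 0
  · exact Real.rpow_nonneg (hA.eigenvalues_nonneg i) s

lemma rpow_mul_rpow (hA : A.PosSemidef) (s : ℝ) : hA.rpow s * hA.rpow (1 - s) = A := by
  simp only [Matrix.PosSemidef.rpow]
  rw [cfc_mul_cfc]
  have h1 := cfc_congr_eigs hA.1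
    (fun x => (if x = 0 then 0 else x ^ s) * (if x = 0 then 0 else x ^ (1-s)))
    (fun x => x) (fun i => ?_)
  · rw [h1, cfc_id]
  · by_cases h : hA.1.eigenvalues i = 0
    · simp [h]
    · have hpos : 0 < hA.1.eigenvalues i := lt_of_le_of_ne (hA.eigenvalues_nonneg i) (Ne.symm h)
      simp only [h, if_false]
      rw [← Real.rpow_add hpos]
      norm_num

lemma rpow_one_eq (hA : A.PosSemidef) : hA.rpow 1 = A := by
  simp only [Matrix.PosSemidef.rpow]
  have h1 := cfc_congr_eigs hA.1 (fun x => if x = 0 then 0 else x ^ (1:ℝ))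
    (fun x => x) (fun i => ?_)
  · rw [h1, cfc_id]
  · by_cases h : hA.1.eigenvalues i = 0
    · simp [h]
    · simp [h, Real.rpow_one]

lemma proj_mul_self (hA : A.PosSemidef) : hA.rpow 0 * A = A := by
  have h1 : hA.rpow 0 * A = hA.1.cfc (fun x => if x = 0 then 0 else x ^ (0:ℝ))
      * hA.1.cfc (fun x => x) := by
    rw [cfc_id hA.1]
    simp only [Matrix.PosSemidef.rpow]
  rw [h1, cfc_mul_cfc]
  have h2 := cfc_congr_eigs hA.1 (fun x => (if x = 0 then 0 else x ^ (0:ℝ)) * x)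
    (fun x => x) (fun i => ?_)
  · rw [h2, cfc_id]
  · by_cases h : hA.1.eigenvalues i = 0 <;> simp [h]

lemma self_mul_proj (hA : A.PosSemidef) : A * hA.rpow 0 = A := by
  have h1 : A * hA.rpow 0 = hA.1.cfc (fun x => x)
      * hA.1.cfc (fun x => if x = 0 then 0 else x ^ (0:ℝ)) := by
    rw [cfc_id hA.1]
    simp only [Matrix.PosSemidef.rpow]
  rw [h1, cfc_mul_cfc]
  have h2 := cfc_congr_eigs hA.1 (fun x => x * (if x = 0 then 0 else x ^ (0:ℝ)))
    (fun x => x) (fun i => ?_)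
  · rw [h2, cfc_id]
  · by_cases h : hA.1.eigenvalues i = 0 <;> simp [h]

lemma one_sub_proj_psd (hA : A.PosSemidef) : ((1:Matrix n n ℂ) - hA.rpow 0).PosSemidef := by
  have h1 : (1:Matrix n n ℂ) - hA.rpow 0
      = hA.1.cfc (fun x => 1 - (if x = 0 then 0 else x ^ (0:ℝ))) := by
    rw [cfc_sub, cfc_one]
    simp only [Matrix.PosSemidef.rpow]
  rw [h1]
  refine cfc_psd hA.1 _ fun i => ?_
  by_cases h : hA.1.eigenvalues i = 0 <;> simp [h]

/-- Löwner–Heinz for `0 < s < 1`. -/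
lemma rpow_mono (hA : A.PosSemidef) (hM : M.PosSemidef) (hle : (M - A).PosSemidef)
    {s : ℝ} (hs0 : 0 < s) (hs1 : s < 1) : (hM.rpow s - hA.rpow s).PosSemidef := by
  refine Matrix.PosSemidef.of_dotProduct_mulVec_nonneg ?_ ?_
  · exact Matrix.IsHermitian.sub (cfc_herm hM.1 _) (cfc_herm hA.1 _)
  · intro v
    simp only [Matrix.PosSemidef.rpow]
    rw [sub_mulVec, dotProduct_sub, cfc_quad, cfc_quad, ← Complex.ofReal_sub]
    refine Complex.zero_le_real.mpr (sub_nonneg.mpr ?_)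
    have hL : ∀ (X : Matrix n n ℂ) (hX : X.PosSemidef),
        ∑ i, (if hX.1.eigenvalues i = 0 then 0 else hX.1.eigenvalues i ^ s)
          * Complex.normSq ((star (hX.1.eigenvectorUnitary : Matrix n n ℂ) *ᵥ v) i)
        = ∑ i, Complex.normSq ((star (hX.1.eigenvectorUnitary : Matrix n n ℂ) *ᵥ v) i)
          * hX.1.eigenvalues i ^ s := by
      intro X hX
      refine Finset.sum_congr rfl fun i _ => ?_
      by_cases h : hX.1.eigenvalues i = 0
      · simp [h, Real.zero_rpow hs0.ne']
      · simp only [h, if_false]; ring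
    rw [hL A hA, hL M hM]
    refine sum_rpow_le hs0 hs1 _ _ _ _
      (fun i => Complex.normSq_nonneg _) (fun i => hA.eigenvalues_nonneg i)
      (fun j => Complex.normSq_nonneg _) (fun j => hM.eigenvalues_nonneg j) ?_
    intro l hl
    have hres := (resolvent_mono hA hM hle hl).dotProduct_mulVec_nonneg v
    rw [sub_mulVec, dotProduct_sub, cfc_quad, cfc_quad, ← Complex.ofReal_sub] at hres
    have hres' := Complex.zero_le_real.mp hres
    have e1 : ∀ (X : Matrix n n ℂ) (hX : X.PosSemidef),
        ∑ i, (hX.1.eigenvalues i / (hX.1.eigenvalues i + l))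
          * Complex.normSq ((star (hX.1.eigenvectorUnitary : Matrix n n ℂ) *ᵥ v) i)
        = ∑ i, Complex.normSq ((star (hX.1.eigenvectorUnitary : Matrix n n ℂ) *ᵥ v) i)
          * (hX.1.eigenvalues i / (hX.1.eigenvalues i + l)) := by
      intro X hX
      exact Finset.sum_congr rfl fun i _ => by ring
    rw [e1 A hA, e1 M hM] at hres'
    linarith

/-- The core Audenaert-type inequality. -/
lemma core (hA : A.PosSemidef) (hB : B.PosSemidef) (hP : P.PosSemidef)
    (hle : (B + P - A).PosSemidef) {s : ℝ} (hs : s ∈ Set.Icc (0:ℝ) 1) :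
    A.trace.re - P.trace.re ≤ ((hA.rpow s * hB.rpow (1 - s)).trace).re := by
  have hPsub : P - (A - B) = B + P - A := by abel
  rcases eq_or_lt_of_le hs.1 with h0 | hs0
  · -- s = 0
    subst h0
    rw [show (1:ℝ) - 0 = 1 by norm_num, rpow_one_eq hB]
    have e1 : (hA.rpow 0 * A).trace.re = A.trace.re := by rw [proj_mul_self hA]
    have e2 : (hA.rpow 0 * A).trace.re - (hA.rpow 0 * B).trace.re
        = (hA.rpow 0 * (A - B)).trace.re := by
      rw [Matrix.mul_sub, trace_sub, Complex.sub_re]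
    have e3 : (hA.rpow 0 * (A - B)).trace.re ≤ (hA.rpow 0 * P).trace.re :=
      trace_mul_mono (rpow_psd hA 0) (hPsub ▸ hle)
    have e4 : (hA.rpow 0 * P).trace.re ≤ ((1:Matrix n n ℂ) * P).trace.re :=
      trace_mul_mono' hP (one_sub_proj_psd hA)
    rw [Matrix.one_mul] at e4
    linarith
  rcases eq_or_lt_of_le hs.2 with h1 | hs1
  · -- s = 1
    subst h1
    rw [rpow_one_eq hA, sub_self]
    have e0 : B * ((1:Matrix n n ℂ) - hB.rpow 0) = 0 := by
      rw [Matrix.mul_sub, Matrix.mul_one, self_mul_proj hB, sub_self]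
    have e1 : A.trace.re - (A * hB.rpow 0).trace.re
        = (A * ((1:Matrix n n ℂ) - hB.rpow 0)).trace.re := by
      rw [Matrix.mul_sub, Matrix.mul_one, trace_sub, Complex.sub_re]
    have e2 : (A * ((1:Matrix n n ℂ) - hB.rpow 0)).trace.re
        = ((A - B) * ((1:Matrix n n ℂ) - hB.rpow 0)).trace.re := by
      rw [Matrix.sub_mul, trace_sub, Complex.sub_re, e0]
      simp
    have e3 : ((A - B) * ((1:Matrix n n ℂ) - hB.rpow 0)).trace.re
        ≤ (P * ((1:Matrix n n ℂ) - hB.rpow 0)).trace.re :=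
      trace_mul_mono' (one_sub_proj_psd hB) (hPsub ▸ hle)
    have e4 : (P * ((1:Matrix n n ℂ) - hB.rpow 0)).trace.re ≤ P.trace.re := by
      have h5 : (P * ((1:Matrix n n ℂ) - hB.rpow 0)).trace.re
          = P.trace.re - (P * hB.rpow 0).trace.re := by
        rw [Matrix.mul_sub, Matrix.mul_one, trace_sub, Complex.sub_re]
      have h6 := trace_mul_re_nonneg hP (rpow_psd hB 0)
      linarith
    linarith
  -- 0 < s < 1
  set M := B + P with hMdef
  have hM : M.PosSemidef := hB.add hP
  have hleA : (M - A).PosSemidef := hle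
  have hleB : (M - B).PosSemidef := by
    have : M - B = P := by rw [hMdef]; abel
    rw [this]; exact hP
  set t := 1 - s with htdef
  have ht0 : 0 < t := by rw [htdef]; linarith
  have ht1 : t < 1 := by rw [htdef]; linarith
  have h1 := rpow_mono hA hM hleA hs0 hs1
  have h2 := rpow_mono hA hM (s := t) hleA ht0 ht1
  have h3 := rpow_mono hB hM hleB hs0 hs1
  have h4 := rpow_mono hB hM (s := t) hleB ht0 ht1
  have e1 : (hA.rpow s * hA.rpow t).trace.re = A.trace.re := by
    rw [rpow_mul_rpow hA s]
  have e2 : (hA.rpow s * hA.rpow t).trace.re ≤ (hA.rpow s * hM.rpow t).trace.re :=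
    trace_mul_mono (rpow_psd hA s) h2
  have e3 : 0 ≤ ((hM.rpow s - hA.rpow s) * (hM.rpow t - hB.rpow t)).trace.re :=
    trace_mul_re_nonneg h1 h4
  have e3' : (hA.rpow s * hM.rpow t).trace.re - (hA.rpow s * hB.rpow t).trace.re
      ≤ (hM.rpow s * hM.rpow t).trace.re - (hM.rpow s * hB.rpow t).trace.re := by
    rw [Matrix.sub_mul, Matrix.mul_sub, Matrix.mul_sub, trace_sub, trace_sub, trace_sub,
      Complex.sub_re, Complex.sub_re, Complex.sub_re] at e3
    linarith
  have e4 : (hM.rpow s * hM.rpow t).trace.re = B.trace.re + P.trace.re := by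
    rw [rpow_mul_rpow hM s, hMdef, trace_add, Complex.add_re]
  have e5 : (hB.rpow s * hB.rpow t).trace.re ≤ (hM.rpow s * hB.rpow t).trace.re :=
    trace_mul_mono' (rpow_psd hB t) h3
  have e6 : (hB.rpow s * hB.rpow t).trace.re = B.trace.re := by
    rw [rpow_mul_rpow hB s]
  linarith

end LH

section final
variable {A B : Matrix n n ℂ}

theorem main (hA : A.PosSemidef) (hB : B.PosSemidef)
    {s : ℝ} (hs : s ∈ Set.Icc (0:ℝ) 1) :
    A.trace.re - (((hA.1.sub hB.1).cfc (fun x => max x 0)).trace).re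
      ≤ ((hA.rpow s * hB.rpow (1 - s)).trace).re ∧
    (A.trace + B.trace = 1 →
      1 - traceNorm (A - B) ≤ 2 * ((hA.rpow s * hB.rpow (1 - s)).trace).re) := by
  set hΔ := hA.1.sub hB.1 with hΔdef
  set Dp := hΔ.cfc (fun x => max x 0) with hDpdef
  set Dm := hΔ.cfc (fun x => max (-x) 0) with hDmdef
  have hDp : Dp.PosSemidef := cfc_psd hΔ _ fun i => le_max_right _ _
  have hDm : Dm.PosSemidef := cfc_psd hΔ _ fun i => le_max_right _ _
  have hsub1 : hΔ.cfc (fun x => max x 0 - x) = Dp - (A - B) := by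
    rw [cfc_sub, cfc_id]
  have hsub1' : hΔ.cfc (fun x => max x 0 - x) = Dm := by
    refine cfc_congr_eigs hΔ _ _ fun i => ?_
    rcases le_total (hΔ.eigenvalues i) 0 with h | h
    · rw [max_eq_right h, max_eq_left (neg_nonneg.mpr h), zero_sub]
    · rw [max_eq_left h, max_eq_right (neg_nonpos.mpr h), sub_self]
  have hsub2 : hΔ.cfc (fun x => max (-x) 0 + x) = Dm + (A - B) := by
    rw [cfc_add, cfc_id]
  have hsub2' : hΔ.cfc (fun x => max (-x) 0 + x) = Dp := by
    refine cfc_congr_eigs hΔ _ _ fun i => ?_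
    rcases le_total (hΔ.eigenvalues i) 0 with h | h
    · rw [max_eq_right h, max_eq_left (neg_nonneg.mpr h), neg_add_cancel]
    · rw [max_eq_left h, max_eq_right (neg_nonpos.mpr h), zero_add]
  have hle1 : (B + Dp - A).PosSemidef := by
    have h1 : B + Dp - A = Dp - (A - B) := by abel
    rw [h1, ← hsub1, hsub1']
    exact hDm
  have hle2 : (A + Dm - B).PosSemidef := by
    have h1 : A + Dm - B = Dm + (A - B) := by abel
    rw [h1, ← hsub2, hsub2']
    exact hDp
  have part1 := core hA hB hDp hle1 hs
  refine ⟨part1, fun htr => ?_⟩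
  have hs' : (1:ℝ) - s ∈ Set.Icc (0:ℝ) 1 :=
    Set.mem_Icc.mpr ⟨by linarith [hs.2], by linarith [hs.1]⟩
  have p2 := core hB hA hDm hle2 hs'
  rw [show (1:ℝ) - (1 - s) = s by ring, trace_mul_comm] at p2
  have habs : (Matrix.posSemidef_conjTranspose_mul_self (A - B)).1.cfc Real.sqrt
      = hΔ.cfc (fun x => |x|) := by
    have hsa : IsSelfAdjoint (A - B) := hΔ
    rw [← Matrix.IsHermitian.cfc_eq, ← Matrix.IsHermitian.cfc_eq]
    rw [show (A - B)ᴴ * (A - B) = cfc (fun x : ℝ => x * x) (A - B) from by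
      rw [cfc_mul (fun x : ℝ => x) (fun x => x) (A - B), cfc_id' (R := ℝ) (a := A - B) hsa, hΔ.eq]]
    rw [← cfc_comp' Real.sqrt (fun x : ℝ => x * x) (A - B) (ha := hsa)]
    exact cfc_congr fun x _ => Real.sqrt_mul_self_eq_abs x
  have hnorm : traceNorm (A - B) = Dp.trace.re + Dm.trace.re := by
    rw [show traceNorm (A - B) = ((Matrix.posSemidef_conjTranspose_mul_self (A - B)).1.cfc
      Real.sqrt).trace.re from rfl, habs]
    have h1 : hΔ.cfc (fun x => |x|) = Dp + Dm := by
      rw [← cfc_add]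
      refine cfc_congr_eigs hΔ _ _ fun i => ?_
      rcases le_total (hΔ.eigenvalues i) 0 with h | h
      · rw [abs_of_nonpos h, max_eq_right h, max_eq_left (neg_nonneg.mpr h), zero_add]
      · rw [abs_of_nonneg h, max_eq_left h, max_eq_right (neg_nonpos.mpr h), add_zero]
    rw [h1, trace_add, Complex.add_re]
  have htr' : A.trace.re + B.trace.re = 1 := by
    have := congrArg Complex.re htr
    rwa [Complex.add_re, Complex.one_re] at this
  rw [hnorm]
  linarith

end final

end Audenaert

/-- For positive semidefinite `A`, `B` and `s ∈ [0,1]`: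
`Tr A - Tr (A-B)₊ ≤ Tr (A^s B^{1-s})`; in particular, if `Tr(A+B) = 1` then
`1 - ‖A-B‖₁ ≤ 2 Tr (A^s B^{1-s})`. -/
theorem stmt0 {n : Type*} [Fintype n] [DecidableEq n]
    {A B : Matrix n n ℂ} (hA : A.PosSemidef) (hB : B.PosSemidef)
    {s : ℝ} (hs : s ∈ Set.Icc (0:ℝ) 1) :
    A.trace.re - (((hA.1.sub hB.1).cfc (fun x => max x 0)).trace).re
      ≤ ((hA.rpow s * hB.rpow (1 - s)).trace).re ∧
    (A.trace + B.trace = 1 →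
      1 - traceNorm (A - B) ≤ 2 * ((hA.rpow s * hB.rpow (1 - s)).trace).re) :=
  Audenaert.main hA hB hs
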